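/- Let Θ : ℚ[U₁, U₂, U₃, U₄, U₅] → ℚ[v₁, v₂, v₃, v₄] be the ℚ-algebra homomorphism determined by U₁ ↦ v₁ + v₂, U₂ ↦ v₃ + v₄, U₃ ↦ v₁² + v₂², U₄ ↦ v₃² + v₄², and U₅ ↦ v₁v₄ + v₂v₃. Then the kernel of Θ is the principal ideal generated by the polynomial 2U₃U₄ + 2U₁U₂U₅ − U₂²U₃ − U₁²U₄ − 2U₅². -/

import Mathlib

open MvPolynomial

noncomputable section KernelThetaAux

abbrev R4' : Type := MvPolynomial (Fin 4) ℚ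
abbrev R5' : Type := MvPolynomial (Fin 5) ℚ

/-- The generator of the kernel. -/
def fgen : R5' := 2 * X 2 * X 3 + 2 * X 0 * X 1 * X 4 - X 1 ^ 2 * X 2 - X 0 ^ 2 * X 3 - 2 * X 4 ^ 2

/-- Inclusion of the first four variables. -/
def iota : R4' →ₐ[ℚ] R5' := rename Fin.castSucc

lemma iota_X (j : Fin 4) : iota (X j) = X (Fin.castSucc j) := rename_X _ _
lemma iota_C (a : ℚ) : iota (C a) = C a := rename_C _ _

lemma cs0 : (Fin.castSucc (0:Fin 4)) = (0:Fin 5) := rfl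
lemma cs1 : (Fin.castSucc (1:Fin 4)) = (1:Fin 5) := rfl
lemma cs2 : (Fin.castSucc (2:Fin 4)) = (2:Fin 5) := rfl
lemma cs3 : (Fin.castSucc (3:Fin 4)) = (3:Fin 5) := rfl
lemma lastf : (Fin.last 4) = (4:Fin 5) := rfl

/-- Division with remainder by `fgen` in the variable `X 4` (up to a power of 2). -/
lemma decomp (P : R5') : ∃ (k : ℕ) (Q : R5') (A B : R4'),
    (2:R5') ^ k * P = Q * fgen + iota A + iota B * X 4 := by
  induction P using MvPolynomial.induction_on with
  | C a => exact ⟨0, 0, C a, 0, by simp [iota_C]⟩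
  | add p q hp hq =>
    obtain ⟨k, Q, A, B, hp⟩ := hp
    obtain ⟨l, Q', A', B', hq⟩ := hq
    refine ⟨k + l, 2^l * Q + 2^k * Q', 2^l * A + 2^k * A', 2^l * B + 2^k * B', ?_⟩
    simp only [map_add, map_mul, map_pow, map_ofNat]
    linear_combination (2:R5')^l * hp + (2:R5')^k * hq
  | mul_X p i hp =>
    obtain ⟨k, Q, A, B, hp⟩ := hp
    induction i using Fin.lastCases with
    | last =>
      refine ⟨k+1, 2 * Q * X 4 - iota B,
        2*X 2*X 3*B - X 1^2*X 2*B - X 0^2*X 3*B, 2*A + 2*X 0*X 1*B, ?_⟩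
      simp only [map_add, map_sub, map_mul, map_pow, map_ofNat, iota_X, cs0, cs1, cs2, cs3,
        lastf, fgen]
      simp only [fgen] at hp
      linear_combination (2 * X 4 : R5') * hp
    | cast j =>
      refine ⟨k, Q * X (Fin.castSucc j), A * X j, B * X j, ?_⟩
      simp only [map_mul, iota_X]
      linear_combination (X (Fin.castSucc j) : R5') * hp

/-- The map `U₁ ↦ v₁+v₂`, `U₂ ↦ v₃+v₄`, `U₃ ↦ v₁²+v₂²`, `U₄ ↦ v₃²+v₄²`. -/
def phi : R4' →ₐ[ℚ] R4' := aeval ![X 0 + X 1, X 2 + X 3, X 0 ^ 2 + X 1 ^ 2, X 2 ^ 2 + X 3 ^ 2]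

lemma phi_inj : Function.Injective phi := by
  set K := FractionRing R4' with hK
  set L := AlgebraicClosure K with hL
  let j : R4' →+* L := (algebraMap K L).comp (algebraMap R4' K)
  have hj : Function.Injective j := by
    intro a b h
    exact IsFractionRing.injective R4' K ((algebraMap K L).injective h)
  have hcz : CharZero L := charZero_of_injective_ringHom hj
  set t : Fin 4 → L := fun i => j (X i) with ht
  obtain ⟨r1, hr1⟩ := IsAlgClosed.exists_pow_nat_eq (k := L) (2 * t 2 - t 0 ^ 2) (n := 2)
    (by norm_num)
  obtain ⟨r2, hr2⟩ := IsAlgClosed.exists_pow_nat_eq (k := L) (2 * t 3 - t 1 ^ 2) (n := 2)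
    (by norm_num)
  let ψ : R4' →ₐ[ℚ] L := aeval ![(t 0 + r1)/2, (t 0 - r1)/2, (t 1 + r2)/2, (t 1 - r2)/2]
  have hcomp : ψ.comp phi = aeval t := by
    apply MvPolynomial.algHom_ext
    intro i
    fin_cases i <;>
      simp [ψ, phi, AlgHom.comp_apply] <;>
      first
        | ring1
        | linear_combination (1/2:L) * hr1
        | linear_combination (1/2:L) * hr2
  have haet : ∀ x : R4', (aeval t : R4' →ₐ[ℚ] L) x = j x := by
    have : (aeval t : R4' →ₐ[ℚ] L).toRingHom = j := by
      apply MvPolynomial.ringHom_ext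
      · intro r
        exact RingHom.congr_fun
          (RingHom.ext_rat ((aeval t : R4' →ₐ[ℚ] L).toRingHom.comp (C : ℚ →+* R4'))
            (j.comp (C : ℚ →+* R4'))) r
      · intro i; simp [ht]
    exact fun x => RingHom.congr_fun this x
  intro a b h
  apply hj
  rw [← haet, ← haet]
  have : ψ (phi a) = ψ (phi b) := by rw [h]
  rwa [← AlgHom.comp_apply, ← AlgHom.comp_apply, hcomp] at this

end KernelThetaAux

/-- Let `Θ : ℚ[U₁,…,U₅] → ℚ[v₁,…,v₄]` be the `ℚ`-algebra homomorphism determined by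
`U₁ ↦ v₁+v₂`, `U₂ ↦ v₃+v₄`, `U₃ ↦ v₁²+v₂²`, `U₄ ↦ v₃²+v₄²`, `U₅ ↦ v₁v₄+v₂v₃`.
Then `ker Θ` is the principal ideal generated by
`2U₃U₄ + 2U₁U₂U₅ − U₂²U₃ − U₁²U₄ − 2U₅²`. -/
theorem kernel_of_Theta
    (Θ : MvPolynomial (Fin 5) ℚ →ₐ[ℚ] MvPolynomial (Fin 4) ℚ)
    (hΘ : Θ = aeval ![(X 0 + X 1 : MvPolynomial (Fin 4) ℚ), X 2 + X 3,
        X 0 ^ 2 + X 1 ^ 2, X 2 ^ 2 + X 3 ^ 2, X 0 * X 3 + X 1 * X 2]) :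
    RingHom.ker Θ.toRingHom = Ideal.span
      {2 * X 2 * X 3 + 2 * X 0 * X 1 * X 4 - X 1 ^ 2 * X 2 - X 0 ^ 2 * X 3 -
        2 * X 4 ^ 2} := by
  subst hΘ
  have hfg : (2 * X 2 * X 3 + 2 * X 0 * X 1 * X 4 - X 1 ^ 2 * X 2 - X 0 ^ 2 * X 3 -
      2 * X 4 ^ 2 : R5') = fgen := rfl
  rw [hfg]
  set Θ : R5' →ₐ[ℚ] R4' := aeval ![(X 0 + X 1 : MvPolynomial (Fin 4) ℚ), X 2 + X 3,
        X 0 ^ 2 + X 1 ^ 2, X 2 ^ 2 + X 3 ^ 2, X 0 * X 3 + X 1 * X 2] with hΘdef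
  have hΘf : Θ fgen = 0 := by
    simp only [fgen, map_sub, map_add, map_mul, map_pow, map_ofNat, hΘdef, aeval_X]
    simp only [Matrix.cons_val_zero, Matrix.cons_val_one, Matrix.head_cons,
      Matrix.cons_val_two, Matrix.tail_cons, Matrix.cons_val_three, Matrix.cons_val_four,
      Matrix.cons_val_fin_one]
    ring
  have hΘiota : ∀ A : R4', Θ (iota A) = phi A := by
    have h : Θ.comp iota = phi := by
      apply MvPolynomial.algHom_ext
      intro i
      fin_cases i <;>
        simp [iota, phi, hΘdef] <;> rfl
    exact fun A => by rw [← h]; rfl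
  have hΘX4 : Θ (X 4) = X 0 * X 3 + X 1 * X 2 := by
    simp [hΘdef]
  apply le_antisymm
  · intro P hP
    have hP0 : Θ P = 0 := hP
    obtain ⟨k, Q, A, B, hdec⟩ := decomp P
    have hAB : phi A + phi B * (X 0 * X 3 + X 1 * X 2) = 0 := by
      have := congrArg Θ hdec
      simp only [map_add, map_mul, map_pow, map_ofNat, hP0, mul_zero, hΘf, zero_mul,
        hΘiota, hΘX4] at this
      linear_combination -this
    -- swap v₁ ↔ v₂
    set sw : R4' →ₐ[ℚ] R4' := rename (Equiv.swap (0:Fin 4) 1) with hsw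
    have hswphi : ∀ x : R4', sw (phi x) = phi x := by
      have h : sw.comp phi = phi := by
        apply MvPolynomial.algHom_ext
        intro i
        fin_cases i <;>
          simp [hsw, phi, rename_X, Equiv.swap_apply_left, Equiv.swap_apply_right,
            Equiv.swap_apply_of_ne_of_ne] <;> ring
      exact fun x => AlgHom.congr_fun h x
    have hAB' : phi A + phi B * (X 1 * X 3 + X 0 * X 2) = 0 := by
      have := congrArg sw hAB
      simp only [map_add, map_mul, map_zero, hswphi] at this
      simp only [hsw, rename_X] at this
      rw [show (Equiv.swap (0:Fin 4) 1) 0 = 1 from Equiv.swap_apply_left 0 1,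
        show (Equiv.swap (0:Fin 4) 1) 1 = 0 from Equiv.swap_apply_right 0 1,
        show (Equiv.swap (0:Fin 4) 1) 3 = 3 from Equiv.swap_apply_of_ne_of_ne (by decide) (by decide),
        show (Equiv.swap (0:Fin 4) 1) 2 = 2 from Equiv.swap_apply_of_ne_of_ne (by decide) (by decide)]
        at this
      linear_combination this
    have hprod : phi B * ((X 0 * X 3 + X 1 * X 2) - (X 1 * X 3 + X 0 * X 2)) = 0 := by
      linear_combination hAB - hAB'
    have hd : ((X 0 * X 3 + X 1 * X 2) - (X 1 * X 3 + X 0 * X 2) : R4') ≠ 0 := by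
      intro h
      have := congrArg (eval ![1,0,0,1]) h
      simp at this
    have hB : B = 0 := by
      apply phi_inj
      rw [map_zero]
      rcases mul_eq_zero.mp hprod with h | h
      · exact h
      · exact absurd h hd
    have hA : A = 0 := by
      apply phi_inj
      rw [map_zero]
      rw [hB, map_zero, zero_mul, add_zero] at hAB
      exact hAB
    simp only [hA, hB, map_zero, add_zero, zero_mul] at hdec
    have hmem : (2:R5')^k * P ∈ Ideal.span {fgen} := by
      rw [hdec]
      exact Ideal.mem_span_singleton.mpr ⟨Q, mul_comm Q fgen⟩
    have hunit : (C ((2⁻¹:ℚ)^k) : R5') * (2:R5')^k = 1 := by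
      have h2 : ((2:R5')^k) = C ((2:ℚ)^k) := by
        rw [map_pow, map_ofNat]
      rw [h2, ← C_mul, ← mul_pow]
      norm_num
    have : P = C ((2⁻¹:ℚ)^k) * ((2:R5')^k * P) := by
      rw [← mul_assoc, hunit, one_mul]
    rw [this]
    exact Ideal.mul_mem_left _ _ hmem
  · rw [Ideal.span_le]
    intro x hx
    simp only [Set.mem_singleton_iff] at hx
    subst hx
    simpa [RingHom.mem_ker] using hΘf
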